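/- Let μ₁, μ₂ > 0 and suppose v̂(μ₁) and v̂(μ₂) are centered points for parameters μ₁ and μ₂ respectively. Then (1/m)·h(v̂(μ₁), v̂(μ₂)) ≤ q((1/2)·log(μ₁/μ₂)), where q(t) := 2(cosh(t) − 1). -/

import Mathlib

open Matrix

/-- Elementwise exponentiation `e^v` of a vector. -/
noncomputable def expV {m : ℕ} (v : Fin m → ℝ) : Fin m → ℝ := fun i => Real.exp (v i)

/-- The log-domain Newton system: `(d, x)` satisfies
`√μ·Aᵀ(eᵛ + eᵛ∘d) = Wx + c` and `√μ·(e^{−v} − e^{−v}∘d) = Ax + b`. -/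
noncomputable def IsNewton {m n : ℕ} (A : Matrix (Fin m) (Fin n) ℝ) (b : Fin m → ℝ)
    (c : Fin n → ℝ) (W : Matrix (Fin n) (Fin n) ℝ) (μ : ℝ) (v d : Fin m → ℝ)
    (x : Fin n → ℝ) : Prop :=
  Real.sqrt μ • (Aᵀ).mulVec (expV v + expV v * d) = W.mulVec x + c ∧
  Real.sqrt μ • (expV (-v) - expV (-v) * d) = A.mulVec x + b

/-- `v` is a centered point for parameter `μ`, witnessed by `x`:
`√μ·Aᵀeᵛ = Wx + c` and `√μ·e^{−v} = Ax + b`. -/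
noncomputable def IsCentered {m n : ℕ} (A : Matrix (Fin m) (Fin n) ℝ) (b : Fin m → ℝ)
    (c : Fin n → ℝ) (W : Matrix (Fin n) (Fin n) ℝ) (μ : ℝ) (v : Fin m → ℝ)
    (x : Fin n → ℝ) : Prop :=
  Real.sqrt μ • (Aᵀ).mulVec (expV v) = W.mulVec x + c ∧
  Real.sqrt μ • expV (-v) = A.mulVec x + b

/-- The divergence `h(u,v) := ⟨eᵘ, e^{−v}⟩ + ⟨e^{−u}, eᵛ⟩ − 2m`. -/
noncomputable def diverg {m : ℕ} (u v : Fin m → ℝ) : ℝ :=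
  (∑ i, Real.exp (u i) * Real.exp (-v i)) + (∑ i, Real.exp (-u i) * Real.exp (v i))
    - 2 * m

/-- The Euclidean norm of a vector in `ℝᵐ`. -/
noncomputable def enorm {m : ℕ} (d : Fin m → ℝ) : ℝ := Real.sqrt (∑ i, d i ^ 2)

/-- if `v̂(μ₁)` and `v̂(μ₂)` are centered points for `μ₁, μ₂ > 0`, then
`(1/m)·h(v̂(μ₁), v̂(μ₂)) ≤ q((1/2)·log(μ₁/μ₂))` where `q(t) := 2(cosh(t) − 1)`. -/
theorem stmt_12 {m n : ℕ} (hm : 0 < m)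
    (A : Matrix (Fin m) (Fin n) ℝ) (b : Fin m → ℝ) (c : Fin n → ℝ)
    (W : Matrix (Fin n) (Fin n) ℝ) (hW : W.PosSemidef) (hAW : (Aᵀ * A + W).PosDef)
    (μ₁ μ₂ : ℝ) (hμ₁ : 0 < μ₁) (hμ₂ : 0 < μ₂)
    (vhat₁ vhat₂ : Fin m → ℝ) (xhat₁ xhat₂ : Fin n → ℝ)
    (hcent₁ : IsCentered A b c W μ₁ vhat₁ xhat₁)
    (hcent₂ : IsCentered A b c W μ₂ vhat₂ xhat₂) :
    (1 / (m : ℝ)) * diverg vhat₁ vhat₂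
      ≤ 2 * (Real.cosh ((1 / 2) * Real.log (μ₁ / μ₂)) - 1) := by
  obtain ⟨h1a, h1b⟩ := hcent₁
  obtain ⟨h2a, h2b⟩ := hcent₂
  set y : Fin n → ℝ := xhat₁ - xhat₂ with hy
  set s₁ := Real.sqrt μ₁
  set s₂ := Real.sqrt μ₂
  have hs₁ : 0 < s₁ := Real.sqrt_pos.mpr hμ₁
  have hs₂ : 0 < s₂ := Real.sqrt_pos.mpr hμ₂
  have hs₁sq : s₁ * s₁ = μ₁ := Real.mul_self_sqrt hμ₁.le
  have hs₂sq : s₂ * s₂ = μ₂ := Real.mul_self_sqrt hμ₂.le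
  -- subtracted equations
  have hA : s₁ • expV (-vhat₁) - s₂ • expV (-vhat₂) = A.mulVec y := by
    rw [h1b, h2b, hy, Matrix.mulVec_sub]; abel
  have hAT : (Aᵀ).mulVec (s₁ • expV vhat₁ - s₂ • expV vhat₂) = W.mulVec y := by
    rw [Matrix.mulVec_sub, Matrix.mulVec_smul, Matrix.mulVec_smul, h1a, h2a, hy,
      Matrix.mulVec_sub]
    abel
  have hkey : 0 ≤ (s₁ • expV vhat₁ - s₂ • expV vhat₂) ⬝ᵥ
      (s₁ • expV (-vhat₁) - s₂ • expV (-vhat₂)) := by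
    rw [hA, Matrix.dotProduct_mulVec, ← Matrix.mulVec_transpose, hAT,
      dotProduct_comm]
    simpa using hW.dotProduct_mulVec_nonneg y
  -- expand the dot product
  have hself₁ : expV vhat₁ ⬝ᵥ expV (-vhat₁) = (m : ℝ) := by
    simp [dotProduct, expV, ← Real.exp_add]
  have hself₂ : expV vhat₂ ⬝ᵥ expV (-vhat₂) = (m : ℝ) := by
    simp [dotProduct, expV, ← Real.exp_add]
  set S₁ := expV vhat₁ ⬝ᵥ expV (-vhat₂) with hS₁
  set S₂ := expV vhat₂ ⬝ᵥ expV (-vhat₁) with hS₂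
  have hexpand : (s₁ • expV vhat₁ - s₂ • expV vhat₂) ⬝ᵥ
      (s₁ • expV (-vhat₁) - s₂ • expV (-vhat₂))
      = μ₁ * m + μ₂ * m - s₁ * s₂ * (S₁ + S₂) := by
    simp only [sub_dotProduct, dotProduct_sub, smul_dotProduct,
      dotProduct_smul, smul_eq_mul, hself₁, hself₂, ← hS₁, ← hS₂]
    rw [← hs₁sq, ← hs₂sq]
    ring
  rw [hexpand] at hkey
  have hkey' : s₁ * s₂ * (S₁ + S₂) ≤ μ₁ * m + μ₂ * m := by linarith
  -- identify diverg with S₁ + S₂ - 2m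
  have hdiv : diverg vhat₁ vhat₂ = S₁ + S₂ - 2 * m := by
    simp only [diverg, hS₁, hS₂, dotProduct, expV]
    have : (∑ i, Real.exp (-vhat₁ i) * Real.exp (vhat₂ i))
        = ∑ i, Real.exp (vhat₂ i) * Real.exp (-vhat₁ i) := by
      exact Finset.sum_congr rfl fun i _ => mul_comm _ _
    rw [this]
    simp [Pi.neg_apply]
  -- compute the RHS
  have hss : 0 < s₁ * s₂ := mul_pos hs₁ hs₂
  have hcosh : 2 * (Real.cosh ((1 / 2) * Real.log (μ₁ / μ₂)) - 1)
      = (μ₁ + μ₂) / (s₁ * s₂) - 2 := by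
    rw [Real.cosh_eq]
    have h1 : Real.exp ((1 / 2) * Real.log (μ₁ / μ₂)) = s₁ / s₂ := by
      rw [Real.log_div hμ₁.ne' hμ₂.ne']
      rw [show (1 / 2 : ℝ) * (Real.log μ₁ - Real.log μ₂)
        = Real.log μ₁ * (1/2) - Real.log μ₂ * (1/2) by ring]
      rw [Real.exp_sub, ← Real.rpow_def_of_pos hμ₁, ← Real.rpow_def_of_pos hμ₂,
        ← Real.sqrt_eq_rpow, ← Real.sqrt_eq_rpow]
    have h2 : Real.exp (-((1 / 2) * Real.log (μ₁ / μ₂))) = s₂ / s₁ := by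
      rw [Real.exp_neg, h1, inv_div]
    rw [h1, h2, ← hs₁sq, ← hs₂sq]
    field_simp
  rw [hcosh, hdiv]
  have hmpos : (0 : ℝ) < m := by exact_mod_cast hm
  have hS : S₁ + S₂ ≤ (μ₁ + μ₂) * m / (s₁ * s₂) := by
    rw [le_div_iff₀ hss]; linarith
  have heq : ((μ₁ + μ₂) / (s₁ * s₂) - 2) * m = (μ₁ + μ₂) * m / (s₁ * s₂) - 2 * m := by
    field_simp
  rw [one_div_mul_eq_div, div_le_iff₀ hmpos, heq]
  linarith
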